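/- Let (X, X') be an exchangeable pair of random variables taking values in a separable metric space 𝒳, let F : 𝒳 × 𝒳 → ℝ be square-integrable and antisymmetric, and let f : 𝒳 → ℝ be square-integrable with E(F(X,X') | X) = f(X) a.s. Define Δ(X) := (1/2) E(|(f(X) - f(X')) F(X,X')| | X). If E(Δ(X)) < ∞, then Var(f(X)) = (1/2) E((f(X) - f(X')) F(X,X')). -/

import Mathlib

open MeasureTheory

/-- **Stein's method for concentration, Theorem 1.5 (i).**
For an exchangeable pair `(X, X')` with antisymmetric square-integrable `F` satisfying
`E(F(X,X') | X) = f(X)` a.s., if `Δ(X) := (1/2) E(|(f(X)-f(X')) F(X,X')| | X)` has finite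
expectation (i.e. `(f(X)-f(X')) F(X,X')` is integrable), then
`Var(f(X)) = (1/2) E((f(X)-f(X')) F(X,X'))`. -/
theorem variance_eq_of_exchangeable_pair
    {Ω 𝒳 : Type*} [MeasurableSpace Ω]
    [MetricSpace 𝒳] [TopologicalSpace.SeparableSpace 𝒳]
    [MeasurableSpace 𝒳] [BorelSpace 𝒳]
    (μ : Measure Ω) [IsProbabilityMeasure μ]
    (X X' : Ω → 𝒳) (hX : Measurable X) (hX' : Measurable X')
    (hexch : Measure.map (fun ω => (X ω, X' ω)) μ = Measure.map (fun ω => (X' ω, X ω)) μ)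
    (F : 𝒳 → 𝒳 → ℝ) (hF : Measurable (Function.uncurry F))
    (hFL2 : MemLp (fun ω => F (X ω) (X' ω)) 2 μ)
    (hFanti : ∀ᵐ ω ∂μ, F (X ω) (X' ω) = - F (X' ω) (X ω))
    (f : 𝒳 → ℝ) (hf : Measurable f)
    (hfL2 : MemLp (fun ω => f (X ω)) 2 μ)
    (hcond : μ[(fun ω => F (X ω) (X' ω)) | MeasurableSpace.comap X inferInstance]
      =ᵐ[μ] fun ω => f (X ω))
    (hΔfin : Integrable (fun ω => (f (X ω) - f (X' ω)) * F (X ω) (X' ω)) μ) :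
    ProbabilityTheory.variance (fun ω => f (X ω)) μ
      = (1 / 2) * ∫ ω, (f (X ω) - f (X' ω)) * F (X ω) (X' ω) ∂μ := by
  have hm : MeasurableSpace.comap X inferInstance ≤ _ := hX.comap_le
  haveI : SigmaFinite (μ.trim hm) := by infer_instance
  have hXX : Measurable (fun ω => (X ω, X' ω)) := hX.prodMk hX'
  have hX'X : Measurable (fun ω => (X' ω, X ω)) := hX'.prodMk hX
  have hG : Measurable (fun p : 𝒳 × 𝒳 => f p.2 * F p.1 p.2) :=
    (hf.comp measurable_snd).mul hF
  -- integrability of f(X) * F(X,X')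
  have hfF : Integrable (fun ω => f (X ω) * F (X ω) (X' ω)) μ := by
    have := (hFL2.smul hfL2 (p := 2) (q := 2) (r := 1))
    rw [memLp_one_iff_integrable] at this
    exact this
  -- integrability of f(X') * F(X,X')
  have hf'F : Integrable (fun ω => f (X' ω) * F (X ω) (X' ω)) μ := by
    have heq : (fun ω => f (X' ω) * F (X ω) (X' ω))
        = fun ω => f (X ω) * F (X ω) (X' ω) - (f (X ω) - f (X' ω)) * F (X ω) (X' ω) := by
      funext ω; ring
    rw [heq]
    exact hfF.sub hΔfin
  have hFint : Integrable (fun ω => F (X ω) (X' ω)) μ :=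
    hFL2.integrable (by norm_num)
  -- transfer lemma via exchangeability
  have transfer : ∀ (G : 𝒳 × 𝒳 → ℝ), Measurable G →
      ∫ ω, G (X ω, X' ω) ∂μ = ∫ ω, G (X' ω, X ω) ∂μ := by
    intro G hG
    have e1 := integral_map hXX.aemeasurable
      (hG.aestronglyMeasurable (μ := Measure.map (fun ω => (X ω, X' ω)) μ))
    have e2 := integral_map hX'X.aemeasurable
      (hG.aestronglyMeasurable (μ := Measure.map (fun ω => (X' ω, X ω)) μ))
    rw [hexch] at e1
    exact e1.symm.trans e2
  -- E[F(X,X')] = 0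
  have hEF : ∫ ω, F (X ω) (X' ω) ∂μ = 0 := by
    have h1 : ∫ ω, F (X ω) (X' ω) ∂μ = ∫ ω, F (X' ω) (X ω) ∂μ :=
      transfer (Function.uncurry F) hF
    have h2 : ∫ ω, F (X ω) (X' ω) ∂μ = - ∫ ω, F (X' ω) (X ω) ∂μ := by
      rw [← integral_neg]
      exact integral_congr_ae hFanti
    linarith [h1, h2]
  -- E[f(X)] = 0
  have hEf : ∫ ω, f (X ω) ∂μ = 0 := by
    rw [← integral_congr_ae hcond, integral_condExp hm, hEF]
  -- f(X) is strongly measurable wrt comap X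
  have hfXm : StronglyMeasurable[MeasurableSpace.comap X inferInstance]
      (fun ω => f (X ω)) := by
    have hXm : Measurable[MeasurableSpace.comap X inferInstance] X :=
      fun s hs => ⟨s, hs, rfl⟩
    exact (hf.comp hXm).stronglyMeasurable
  -- E[f(X) F(X,X')] = E[f(X)^2]
  have key : ∫ ω, f (X ω) * F (X ω) (X' ω) ∂μ = ∫ ω, f (X ω) * f (X ω) ∂μ := by
    have hce : μ[(fun ω => f (X ω)) * (fun ω => F (X ω) (X' ω))
          | MeasurableSpace.comap X inferInstance]
        =ᵐ[μ] (fun ω => f (X ω))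
          * μ[(fun ω => F (X ω) (X' ω)) | MeasurableSpace.comap X inferInstance] :=
      condExp_mul_of_stronglyMeasurable_left hfXm hfF hFint
    have step1 : ∫ ω, f (X ω) * F (X ω) (X' ω) ∂μ
        = ∫ ω, (μ[(fun ω => f (X ω)) * (fun ω => F (X ω) (X' ω))
            | MeasurableSpace.comap X inferInstance]) ω ∂μ :=
      (integral_condExp hm).symm
    rw [step1]
    refine integral_congr_ae ?_
    filter_upwards [hce, hcond] with ω h1 h2
    rw [h1]
    simp only [Pi.mul_apply]
    rw [h2]
  -- E[f(X') F(X,X')] = - E[f(X) F(X,X')]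
  have key' : ∫ ω, f (X' ω) * F (X ω) (X' ω) ∂μ = - ∫ ω, f (X ω) * F (X ω) (X' ω) ∂μ := by
    have h1 : ∫ ω, f (X' ω) * F (X ω) (X' ω) ∂μ = ∫ ω, f (X ω) * F (X' ω) (X ω) ∂μ :=
      transfer (fun p => f p.2 * F p.1 p.2) hG
    rw [h1, ← integral_neg]
    refine integral_congr_ae ?_
    filter_upwards [hFanti] with ω h
    rw [h]; ring
  -- put together
  have hsplit : ∫ ω, (f (X ω) - f (X' ω)) * F (X ω) (X' ω) ∂μ
      = 2 * ∫ ω, f (X ω) * f (X ω) ∂μ := by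
    have heq : (fun ω => (f (X ω) - f (X' ω)) * F (X ω) (X' ω))
        = fun ω => f (X ω) * F (X ω) (X' ω) - f (X' ω) * F (X ω) (X' ω) := by
      funext ω; ring
    rw [heq, integral_sub hfF hf'F, key', key]
    ring
  rw [ProbabilityTheory.variance_eq_sub hfL2, hEf, hsplit]
  have hsq : ∫ ω, ((fun ω => f (X ω)) ^ 2) ω ∂μ = ∫ ω, f (X ω) * f (X ω) ∂μ := by
    refine integral_congr_ae (Filter.Eventually.of_forall fun ω => ?_)
    simp [pow_two]
  rw [hsq]
  ring
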